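/- Let n_s ≥ 2 and N ≥ 1, and fix input dimension d and output dimension m. (i) The set of functions ℝ^d → ℝ^m realized by shallow LN-Nets of width n_s equals the set of functions realized by shallow LS-Nets of width n_s − 1. (ii) More generally, the set of functions realized by shallow PLN-Nets of norm size n_s and width n_s·N equals the set of functions realized by shallow PLS-Nets of norm size n_s − 1 and width (n_s − 1)·N. -/

import Mathlib

/-- Layer normalization on `ℝ^n`: `LN(h)ⱼ = (hⱼ − μ)/σ` when `σ ≠ 0`, and `0` when `σ = 0`. -/
noncomputable def LN {n : ℕ} (h : Fin n → ℝ) : Fin n → ℝ :=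
  let μ : ℝ := (∑ i, h i) / n
  let σ : ℝ := Real.sqrt ((∑ i, (h i - μ) ^ 2) / n)
  if σ = 0 then 0 else fun j => (h j - μ) / σ

/-- Layer scaling (RMSNorm) on `ℝ^n`: `LS(h) = h/σ̃(h)` when `σ̃(h) ≠ 0`, and `0` otherwise. -/
noncomputable def LS {n : ℕ} (h : Fin n → ℝ) : Fin n → ℝ :=
  let σ : ℝ := Real.sqrt ((∑ i, (h i) ^ 2) / n)
  if σ = 0 then 0 else fun j => h j / σ

/-- Parallel layer normalization: `N` consecutive blocks of size `ns`, `LN` on each. -/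
noncomputable def PLN (ns N : ℕ) (h : Fin (N * ns) → ℝ) : Fin (N * ns) → ℝ :=
  fun i => LN (fun j : Fin ns => h (finProdFinEquiv (i.divNat, j))) i.modNat

/-- Parallel layer scaling: `N` consecutive blocks of size `ns`, `LS` on each. -/
noncomputable def PLS (ns N : ℕ) (h : Fin (N * ns) → ℝ) : Fin (N * ns) → ℝ :=
  fun i => LS (fun j : Fin ns => h (finProdFinEquiv (i.divNat, j))) i.modNat

/-- Functions `ℝ^d → ℝ^m` realized by shallow LN-Nets of width `ns`. -/
def LNNetSet (ns d m : ℕ) : Set ((Fin d → ℝ) → (Fin m → ℝ)) :=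
  {f | ∃ (W₁ : Matrix (Fin ns) (Fin d) ℝ) (b₁ : Fin ns → ℝ)
        (W₂ : Matrix (Fin m) (Fin ns) ℝ) (b₂ : Fin m → ℝ),
        f = fun x => W₂.mulVec (LN (W₁.mulVec x + b₁)) + b₂}

/-- Functions `ℝ^d → ℝ^m` realized by shallow LS-Nets of width `ns`. -/
def LSNetSet (ns d m : ℕ) : Set ((Fin d → ℝ) → (Fin m → ℝ)) :=
  {f | ∃ (W₁ : Matrix (Fin ns) (Fin d) ℝ) (b₁ : Fin ns → ℝ)
        (W₂ : Matrix (Fin m) (Fin ns) ℝ) (b₂ : Fin m → ℝ),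
        f = fun x => W₂.mulVec (LS (W₁.mulVec x + b₁)) + b₂}

/-- Functions `ℝ^d → ℝ^m` realized by shallow PLN-Nets of norm size `ns`, width `ns·N`. -/
def PLNNetSet (ns N d m : ℕ) : Set ((Fin d → ℝ) → (Fin m → ℝ)) :=
  {f | ∃ (W₁ : Matrix (Fin (N * ns)) (Fin d) ℝ) (b₁ : Fin (N * ns) → ℝ)
        (W₂ : Matrix (Fin m) (Fin (N * ns)) ℝ) (b₂ : Fin m → ℝ),
        f = fun x => W₂.mulVec (PLN ns N (W₁.mulVec x + b₁)) + b₂}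

/-- Functions `ℝ^d → ℝ^m` realized by shallow PLS-Nets of norm size `ns`, width `ns·N`. -/
def PLSNetSet (ns N d m : ℕ) : Set ((Fin d → ℝ) → (Fin m → ℝ)) :=
  {f | ∃ (W₁ : Matrix (Fin (N * ns)) (Fin d) ℝ) (b₁ : Fin (N * ns) → ℝ)
        (W₂ : Matrix (Fin m) (Fin (N * ns)) ℝ) (b₂ : Fin m → ℝ),
        f = fun x => W₂.mulVec (PLS ns N (W₁.mulVec x + b₁)) + b₂}

open Matrix

noncomputable def sumLM (n : ℕ) : EuclideanSpace ℝ (Fin n) →ₗ[ℝ] ℝ where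
  toFun h := ∑ i, h i
  map_add' x y := by simp [Finset.sum_add_distrib]
  map_smul' c x := by simp [Finset.mul_sum]

set_option maxHeartbeats 1000000 in
lemma exists_V (ns : ℕ) (hns : 2 ≤ ns) :
    ∃ V : Matrix (Fin ns) (Fin (ns - 1)) ℝ,
      Vᵀ * V = 1 ∧
      ∀ h : Fin ns → ℝ, V.mulVec (Vᵀ.mulVec h) = fun i => h i - (∑ k, h k) / ns := by
  classical
  set E := EuclideanSpace ℝ (Fin ns)
  set f := sumLM ns with hf
  have hsurj : LinearMap.range f = ⊤ := by
    rw [LinearMap.range_eq_top]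
    intro r
    refine ⟨WithLp.toLp 2 (fun _ => r / ns), ?_⟩
    have hns0 : (ns : ℝ) ≠ 0 := by positivity
    simp [sumLM, hf, Finset.sum_const, hns0]
    field_simp
  have hrank : Module.finrank ℝ (LinearMap.ker f) = ns - 1 := by
    have h1 := LinearMap.finrank_range_add_finrank_ker f
    rw [hsurj] at h1
    simp [finrank_euclideanSpace_fin] at h1
    omega
  let b : OrthonormalBasis (Fin (ns - 1)) ℝ (LinearMap.ker f) :=
    (stdOrthonormalBasis ℝ (LinearMap.ker f)).reindex (finCongr hrank)
  let V : Matrix (Fin ns) (Fin (ns - 1)) ℝ := fun i j => ((b j : E) i)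
  have hinner : ∀ (x : E) (j : Fin (ns - 1)), (Vᵀ.mulVec x) j = inner ℝ (b j : E) x := by
    intro x j
    simp [Matrix.mulVec, dotProduct, PiLp.inner_apply, RCLike.inner_apply, V,
      Matrix.transpose_apply, mul_comm]
    rfl
  have hVtV : Vᵀ * V = 1 := by
    ext j k
    have := b.orthonormal
    rw [orthonormal_iff_ite] at this
    have h2 : (inner ℝ (b j) (b k) : ℝ) = if j = k then 1 else 0 := this j k
    rw [Submodule.coe_inner] at h2
    simp only [Matrix.mul_apply, Matrix.transpose_apply, Matrix.one_apply, V]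
    rw [← h2, PiLp.inner_apply]
    simp [RCLike.inner_apply]
    exact Matrix.mul_apply.trans (Finset.sum_congr rfl fun x _ => mul_comm _ _)
  refine ⟨V, hVtV, ?_⟩
  intro h
  set μ : ℝ := (∑ k, h k) / ns with hμ
  have hns0 : (ns : ℝ) ≠ 0 := by positivity
  have hg : (WithLp.toLp 2 (fun i => h i - μ) : E) ∈ LinearMap.ker f := by
    simp [sumLM, hf, LinearMap.mem_ker, Finset.sum_sub_distrib, hμ]
    field_simp
    simp
  set g : E := WithLp.toLp 2 (fun i => h i - μ) with hgdef
  -- V^T h = V^T g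
  have hcol : ∀ j, ∑ i, V i j = 0 := by
    intro j
    have h2 := LinearMap.mem_ker.mp (b j).2
    simp only [hf, sumLM, LinearMap.coe_mk, AddHom.coe_mk] at h2
    simpa [V] using h2
  have hVth : Vᵀ.mulVec h = Vᵀ.mulVec g := by
    funext j
    simp only [Matrix.mulVec, dotProduct, Matrix.transpose_apply, hgdef, WithLp.ofLp_toLp]
    have hz : ∑ x, V x j * μ = 0 := by rw [← Finset.sum_mul, hcol j, zero_mul]
    simp only [mul_sub, Finset.sum_sub_distrib, hz, sub_zero]
  rw [hVth]
  -- now V (Vᵀ g) = g via sum_repr'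
  have hrepr := b.sum_repr' (⟨g, hg⟩ : LinearMap.ker f)
  have hrepr' : ∑ j, (inner ℝ ((b j : E)) g : ℝ) • (b j : E) = g := by
    have h3 := congrArg (Subtype.val) hrepr
    rw [AddSubmonoidClass.coe_finset_sum] at h3
    simp only [SetLike.val_smul, smul_eq_mul, Submodule.coe_inner] at h3
    exact h3
  have hrepr'' : ∀ i, ∑ j, (inner ℝ ((b j : E)) g : ℝ) * (b j : E) i = g i := by
    intro i
    have h5 := congrArg (EuclideanSpace.proj (𝕜 := ℝ) i) hrepr'
    rw [map_sum] at h5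
    simpa [smul_eq_mul] using h5
  funext i
  calc (V.mulVec (Vᵀ.mulVec g)) i = ∑ j, V i j * (Vᵀ.mulVec g) j := rfl
    _ = ∑ j, (inner ℝ ((b j : E)) g : ℝ) * (b j : E) i := by
        refine Finset.sum_congr rfl fun j _ => ?_
        rw [hinner g j, mul_comm]
    _ = g i := hrepr'' i
    _ = h i - (∑ k, h k) / ns := rfl

lemma key_lemma (ns : ℕ) (hns : 2 ≤ ns) (V : Matrix (Fin ns) (Fin (ns - 1)) ℝ)
    (hVtV : Vᵀ * V = 1)
    (hproj : ∀ h : Fin ns → ℝ, V.mulVec (Vᵀ.mulVec h) = fun i => h i - (∑ k, h k) / ns)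
    (h : Fin ns → ℝ) :
    LN h = (Real.sqrt ns / Real.sqrt ((ns : ℝ) - 1)) • V.mulVec (LS (Vᵀ.mulVec h)) := by
  have hns0 : (0:ℝ) < ns := by positivity
  have hns1 : (0:ℝ) < (ns:ℝ) - 1 := by
    have : (2:ℝ) ≤ ns := by exact_mod_cast hns
    linarith
  have hcast : ((ns - 1 : ℕ) : ℝ) = (ns : ℝ) - 1 := by
    have : 1 ≤ ns := by omega
    push_cast [this]
    ring
  set μ : ℝ := (∑ i, h i) / ns with hμ
  set u : Fin (ns - 1) → ℝ := Vᵀ.mulVec h with hu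
  set S : ℝ := ∑ i, (h i - μ) ^ 2 with hS
  set T : ℝ := ∑ j, u j ^ 2 with hT
  have hSnn : 0 ≤ S := Finset.sum_nonneg fun i _ => sq_nonneg _
  have hVu : V.mulVec u = fun i => h i - μ := hproj h
  have hTS : T = S := by
    have h1 : Vᵀ.mulVec (V.mulVec u) = u := by
      rw [Matrix.mulVec_mulVec, hVtV, Matrix.one_mulVec]
    calc T = dotProduct u u := by
            simp [dotProduct, hT, sq]
      _ = dotProduct (Vᵀ.mulVec (V.mulVec u)) u := by rw [h1]
      _ = dotProduct (Matrix.vecMul (V.mulVec u) V) u := by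
            rw [← Matrix.vecMul_transpose, Matrix.transpose_transpose]
      _ = dotProduct (V.mulVec u) (V.mulVec u) := by
            rw [← dotProduct_mulVec]
      _ = S := by
            rw [hVu, hS]
            simp [dotProduct, sq]
  -- the σ's
  by_cases hS0 : S = 0
  · -- both sides zero
    have hT0 : T = 0 := by rw [hTS, hS0]
    have hLN : LN h = 0 := by
      simp only [LN]
      rw [if_pos]
      rw [← hμ, ← hS, hS0]
      simp
    have hLS : LS u = 0 := by
      simp only [LS]
      rw [if_pos]
      rw [← hT, hT0]
      simp
    rw [hLN, hu, hLS]
    simp [Matrix.mulVec_zero]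
  · have hSpos : 0 < S := lt_of_le_of_ne hSnn (Ne.symm hS0)
    have hsqS : 0 < Real.sqrt S := Real.sqrt_pos.mpr hSpos
    have hσ : Real.sqrt ((∑ i, (h i - μ) ^ 2) / ns) = Real.sqrt S / Real.sqrt ns := by
      rw [← hS, Real.sqrt_div hSnn]
    have hσ' : Real.sqrt ((∑ j, u j ^ 2) / (ns - 1 : ℕ)) = Real.sqrt S / Real.sqrt ((ns:ℝ) - 1) := by
      rw [← hT, hTS, hcast, Real.sqrt_div hSnn]
    have hσne : Real.sqrt S / Real.sqrt ns ≠ 0 := by positivity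
    have hσ'ne : Real.sqrt S / Real.sqrt ((ns:ℝ)-1) ≠ 0 := by positivity
    simp only [LN, LS]
    rw [← hμ, ← hS]  -- might fail; S is already set
    rw [hσ, if_neg hσne, hσ', if_neg hσ'ne]
    funext i
    have hVui := congrFun hVu i
    simp only [Pi.smul_apply, smul_eq_mul]
    have : V.mulVec (fun j => u j / (Real.sqrt S / Real.sqrt ((ns:ℝ)-1))) i
        = (Real.sqrt S / Real.sqrt ((ns:ℝ)-1))⁻¹ * (h i - μ) := by
      have hfun : (fun j => u j / (Real.sqrt S / Real.sqrt ((ns:ℝ)-1)))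
          = (Real.sqrt S / Real.sqrt ((ns:ℝ)-1))⁻¹ • u := by
        funext j; simp [div_eq_inv_mul, mul_comm]
      rw [hfun, Matrix.mulVec_smul]
      simp [hVui]
    rw [this]
    have hsn : 0 < Real.sqrt ns := Real.sqrt_pos.mpr hns0
    have hsn1 : 0 < Real.sqrt ((ns:ℝ)-1) := Real.sqrt_pos.mpr hns1
    field_simp

lemma transfer {n n' d m : ℕ} (A : (Fin n → ℝ) → (Fin n → ℝ)) (B : (Fin n' → ℝ) → (Fin n' → ℝ))
    (V : Matrix (Fin n) (Fin n') ℝ) (c : ℝ) (hc : c ≠ 0)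
    (hVV : ∀ u : Fin n' → ℝ, Vᵀ.mulVec (V.mulVec u) = u)
    (hkey : ∀ h, A h = c • V.mulVec (B (Vᵀ.mulVec h))) :
    {f : (Fin d → ℝ) → (Fin m → ℝ) |
      ∃ (W₁ : Matrix (Fin n) (Fin d) ℝ) (b₁ : Fin n → ℝ)
        (W₂ : Matrix (Fin m) (Fin n) ℝ) (b₂ : Fin m → ℝ),
        f = fun x => W₂.mulVec (A (W₁.mulVec x + b₁)) + b₂} =
    {f : (Fin d → ℝ) → (Fin m → ℝ) |
      ∃ (W₁ : Matrix (Fin n') (Fin d) ℝ) (b₁ : Fin n' → ℝ)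
        (W₂ : Matrix (Fin m) (Fin n') ℝ) (b₂ : Fin m → ℝ),
        f = fun x => W₂.mulVec (B (W₁.mulVec x + b₁)) + b₂} := by
  ext f
  constructor
  · rintro ⟨W₁, b₁, W₂, b₂, rfl⟩
    refine ⟨Vᵀ * W₁, Vᵀ.mulVec b₁, c • (W₂ * V), b₂, ?_⟩
    funext x
    have h1 : (Vᵀ * W₁).mulVec x + Vᵀ.mulVec b₁ = Vᵀ.mulVec (W₁.mulVec x + b₁) := by
      rw [Matrix.mulVec_add, Matrix.mulVec_mulVec]
    rw [h1, hkey]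
    congr 1
    rw [Matrix.mulVec_smul, Matrix.smul_mulVec, Matrix.mulVec_mulVec]
  · rintro ⟨W₁, b₁, W₂, b₂, rfl⟩
    refine ⟨V * W₁, V.mulVec b₁, c⁻¹ • (W₂ * Vᵀ), b₂, ?_⟩
    funext x
    have h1 : (V * W₁).mulVec x + V.mulVec b₁ = V.mulVec (W₁.mulVec x + b₁) := by
      rw [Matrix.mulVec_add, Matrix.mulVec_mulVec]
    rw [h1, hkey]
    congr 1
    rw [Matrix.smul_mulVec, Matrix.mulVec_smul, Matrix.mulVec_mulVec,
      ← Matrix.mulVec_mulVec, hVV, smul_smul, inv_mul_cancel₀ hc, one_smul,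
      ← Matrix.mulVec_mulVec, hVV]

def blk {N k : ℕ} (x : Fin (N * k) → ℝ) (q : Fin N) : Fin k → ℝ :=
  fun j => x (finProdFinEquiv (q, j))

lemma divNat_e {N k : ℕ} (q : Fin N) (j : Fin k) :
    (finProdFinEquiv (q, j)).divNat = q :=
  congrArg Prod.fst (finProdFinEquiv.symm_apply_apply (q, j))

lemma modNat_e {N k : ℕ} (q : Fin N) (j : Fin k) :
    (finProdFinEquiv (q, j)).modNat = j :=
  congrArg Prod.snd (finProdFinEquiv.symm_apply_apply (q, j))

lemma e_div_mod {N k : ℕ} (i : Fin (N * k)) :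
    finProdFinEquiv (i.divNat, i.modNat) = i :=
  finProdFinEquiv.apply_symm_apply i

def PV {N a b : ℕ} (V : Matrix (Fin a) (Fin b) ℝ) : Matrix (Fin (N * a)) (Fin (N * b)) ℝ :=
  fun i j => if i.divNat = j.divNat then V i.modNat j.modNat else 0

lemma PV_transpose {N a b : ℕ} (V : Matrix (Fin a) (Fin b) ℝ) :
    (PV (N := N) V)ᵀ = PV Vᵀ := by
  ext i j
  simp [PV, Matrix.transpose_apply, eq_comm]

lemma blk_mulVec {N a b : ℕ} (V : Matrix (Fin a) (Fin b) ℝ) (u : Fin (N * b) → ℝ) (q : Fin N) :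
    blk ((PV (N := N) V).mulVec u) q = V.mulVec (blk u q) := by
  funext j
  simp only [blk, Matrix.mulVec, dotProduct, PV, divNat_e, modNat_e]
  rw [← Equiv.sum_comp (finProdFinEquiv (m := N) (n := b))]
  rw [Fintype.sum_prod_type]
  simp only [divNat_e, modNat_e, ite_mul, zero_mul]
  rw [Finset.sum_comm]
  simp [Finset.sum_ite_eq', blk]

lemma apply_eq_blk {N k : ℕ} (x : Fin (N * k) → ℝ) (i : Fin (N * k)) :
    x i = blk x i.divNat i.modNat := by
  rw [blk, e_div_mod]

lemma hVV_P {N a b : ℕ} (V : Matrix (Fin a) (Fin b) ℝ)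
    (hVV : ∀ u : Fin b → ℝ, Vᵀ.mulVec (V.mulVec u) = u) :
    ∀ u : Fin (N * b) → ℝ, (PV (N := N) V)ᵀ.mulVec ((PV (N := N) V).mulVec u) = u := by
  intro u
  funext i
  rw [apply_eq_blk ((PV (N := N) V)ᵀ.mulVec _) i, PV_transpose, blk_mulVec, blk_mulVec, hVV,
    ← apply_eq_blk]

lemma blk_PLS {ns N : ℕ} (w : Fin (N * ns) → ℝ) (q : Fin N) :
    blk (PLS ns N w) q = LS (blk w q) := by
  funext j
  simp only [blk, PLS, divNat_e, modNat_e]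
  rfl

lemma keyP {ns N : ℕ} (hns : 2 ≤ ns) (V : Matrix (Fin ns) (Fin (ns - 1)) ℝ)
    (hVtV : Vᵀ * V = 1)
    (hproj : ∀ h : Fin ns → ℝ, V.mulVec (Vᵀ.mulVec h) = fun i => h i - (∑ k, h k) / ns)
    (h : Fin (N * ns) → ℝ) :
    PLN ns N h = (Real.sqrt ns / Real.sqrt ((ns : ℝ) - 1)) •
      (PV (N := N) V).mulVec (PLS (ns - 1) N ((PV (N := N) V)ᵀ.mulVec h)) := by
  funext i
  have lhs : PLN ns N h i = LN (blk h i.divNat) i.modNat := rfl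
  rw [lhs]
  rw [Pi.smul_apply, apply_eq_blk ((PV (N := N) V).mulVec _) i, blk_mulVec, blk_PLS,
    PV_transpose, blk_mulVec, key_lemma ns hns V hVtV hproj (blk h i.divNat)]
  simp

/-- Shallow LN-Nets of width `n_s` and shallow LS-Nets of width `n_s − 1` realize the same
functions, and likewise for the corresponding parallel (PLN/PLS) structures. -/
theorem LNNetSet_eq_LSNetSet_and_PLNNetSet_eq_PLSNetSet
    (ns N d m : ℕ) (hns : 2 ≤ ns) (hN : 1 ≤ N) :
    LNNetSet ns d m = LSNetSet (ns - 1) d m ∧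
    PLNNetSet ns N d m = PLSNetSet (ns - 1) N d m := by
  obtain ⟨V, hVtV, hproj⟩ := exists_V ns hns
  set c : ℝ := Real.sqrt ns / Real.sqrt ((ns : ℝ) - 1) with hcdef
  have hns0 : (0:ℝ) < ns := by positivity
  have hns1 : (0:ℝ) < (ns:ℝ) - 1 := by
    have : (2:ℝ) ≤ ns := by exact_mod_cast hns
    linarith
  have hc : c ≠ 0 := by
    rw [hcdef]
    positivity
  have hVV : ∀ u : Fin (ns - 1) → ℝ, Vᵀ.mulVec (V.mulVec u) = u := by
    intro u
    rw [Matrix.mulVec_mulVec, hVtV, Matrix.one_mulVec]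
  constructor
  · exact transfer LN LS V c hc hVV (key_lemma ns hns V hVtV hproj)
  · exact transfer (PLN ns N) (PLS (ns - 1) N) (PV (N := N) V) c hc
      (hVV_P V hVV) (keyP hns V hVtV hproj)
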